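/- Let H be a complex Hilbert space and let V ⊆ B(H) be a linear subspace containing every compact operator on H. Then the identity map is the only V-map on B(H): every completely contractive linear map φ : B(H) → B(H) with φ(v) = v for all v ∈ V is the identity map on B(H). -/

import Mathlib

variable {H : Type*} [NormedAddCommGroup H] [InnerProductSpace ℂ H] [CompleteSpace H]

/-- The bounded operator on the Hilbert space `H ⊕ ⋯ ⊕ H` (with its ℓ²-norm)
induced by an `n × n` matrix of bounded operators on `H`. -/
noncomputable def matOp {H : Type*} [NormedAddCommGroup H] [InnerProductSpace ℂ H]
    {n : ℕ} (A : Matrix (Fin n) (Fin n) (H →L[ℂ] H)) :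
    PiLp 2 (fun _ : Fin n => H) →L[ℂ] PiLp 2 (fun _ : Fin n => H) :=
  ((PiLp.continuousLinearEquiv 2 ℂ (fun _ : Fin n => H)).symm.toContinuousLinearMap.comp
      (ContinuousLinearMap.pi fun i => ∑ j, (A i j).comp (ContinuousLinearMap.proj j))).comp
    (PiLp.continuousLinearEquiv 2 ℂ (fun _ : Fin n => H)).toContinuousLinearMap

/-- A linear map on `B(H)` is completely contractive if all of its matrix amplifications
are contractive with respect to the C*-norms on `Mₙ(B(H)) ≅ B(H ⊕ ⋯ ⊕ H)`. -/
def FullCC {H : Type*} [NormedAddCommGroup H] [InnerProductSpace ℂ H]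
    (φ : (H →L[ℂ] H) →ₗ[ℂ] (H →L[ℂ] H)) : Prop :=
  ∀ (n : ℕ) (A : Matrix (Fin n) (Fin n) (H →L[ℂ] H)), ‖matOp (A.map φ)‖ ≤ ‖matOp A‖

/-- An `S`-map: a completely contractive linear map of `B(H)` fixing `S` pointwise. -/
def IsSMap {H : Type*} [NormedAddCommGroup H] [InnerProductSpace ℂ H]
    (S : Set (H →L[ℂ] H)) (φ : (H →L[ℂ] H) →ₗ[ℂ] (H →L[ℂ] H)) : Prop :=
  FullCC φ ∧ ∀ s ∈ S, φ s = s

/-- A minimal `S`-projection: an idempotent `S`-map whose seminorm `T ↦ ‖E T‖`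
is minimal among the seminorms of all `S`-maps. -/
def IsMinimalSProj {H : Type*} [NormedAddCommGroup H] [InnerProductSpace ℂ H]
    (S : Set (H →L[ℂ] H)) (E : (H →L[ℂ] H) →ₗ[ℂ] (H →L[ℂ] H)) : Prop :=
  IsSMap S E ∧ E ∘ₗ E = E ∧
    ∀ ψ : (H →L[ℂ] H) →ₗ[ℂ] (H →L[ℂ] H), IsSMap S ψ →
      (∀ T, ‖ψ T‖ ≤ ‖E T‖) → ∀ T, ‖ψ T‖ = ‖E T‖

set_option linter.unusedSectionVars false

lemma matOp_apply' {n : ℕ} (A : Matrix (Fin n) (Fin n) (H →L[ℂ] H))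
    (v : PiLp 2 (fun _ : Fin n => H)) (i : Fin n) :
    matOp A v i = ∑ j, A i j (v j) := by
  simp [matOp, ContinuousLinearMap.pi, ContinuousLinearMap.proj]

lemma piLp_one_norm (v : PiLp 2 (fun _ : Fin 1 => H)) : ‖v‖ = ‖v 0‖ := by
  rw [PiLp.norm_eq_of_L2]; simp [Real.sqrt_sq]

set_option synthInstance.maxHeartbeats 400000 in
set_option maxHeartbeats 1000000 in
lemma norm_matOp_one (A : Matrix (Fin 1) (Fin 1) (H →L[ℂ] H)) : ‖matOp A‖ = ‖A 0 0‖ := by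
  apply le_antisymm
  · refine ContinuousLinearMap.opNorm_le_bound _ (norm_nonneg _) fun v => ?_
    rw [piLp_one_norm, piLp_one_norm, matOp_apply']
    simpa using (A 0 0).le_opNorm (v 0)
  · refine ContinuousLinearMap.opNorm_le_bound _ (norm_nonneg (matOp A)) fun x => ?_
    set v : PiLp 2 (fun _ : Fin 1 => H) := WithLp.toLp 2 (fun _ => x) with hv
    have h1 : ‖matOp A v‖ ≤ ‖matOp A‖ * ‖v‖ := (matOp A).le_opNorm v
    rw [piLp_one_norm, piLp_one_norm, matOp_apply'] at h1
    simpa using h1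

set_option synthInstance.maxHeartbeats 400000 in
set_option maxHeartbeats 1000000 in
lemma fullCC_contractive {φ : (H →L[ℂ] H) →ₗ[ℂ] (H →L[ℂ] H)} (h : FullCC φ)
    (T : H →L[ℂ] H) : ‖φ T‖ ≤ ‖T‖ := by
  have := h 1 (Matrix.of fun _ _ => T)
  rwa [norm_matOp_one, norm_matOp_one] at this

lemma rankOne_compact (u w : H) :
    IsCompactOperator ((innerSL ℂ u).smulRight w) := by
  refine ⟨(fun c : ℂ => c • w) '' Metric.closedBall 0 ‖u‖, ?_, ?_⟩
  · exact (isCompact_closedBall 0 ‖u‖).image (continuous_id.smul continuous_const)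
  · refine Filter.mem_of_superset (Metric.ball_mem_nhds 0 one_pos) fun y hy => ?_
    refine ⟨inner ℂ u y, ?_, rfl⟩
    simp only [Metric.mem_closedBall, dist_zero_right]
    calc ‖(inner ℂ u y : ℂ)‖ ≤ ‖u‖ * ‖y‖ := norm_inner_le_norm u y
      _ ≤ ‖u‖ * 1 := by
          have : ‖y‖ ≤ 1 := le_of_lt (by simpa [dist_zero_right] using hy)
          exact mul_le_mul_of_nonneg_left this (norm_nonneg u)
      _ = ‖u‖ := mul_one _

/-- If a linear subspace `V ⊆ B(H)` contains every compact operator,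
then the only `V`-map on `B(H)` is the identity. -/
theorem stmt_8 (V : Submodule ℂ (H →L[ℂ] H))
    (hK : ∀ T : H →L[ℂ] H, IsCompactOperator T → T ∈ V)
    (φ : (H →L[ℂ] H) →ₗ[ℂ] (H →L[ℂ] H)) (hφ : IsSMap (V : Set (H →L[ℂ] H)) φ) :
    ∀ T : H →L[ℂ] H, φ T = T := by
  intro T
  by_contra hne
  obtain ⟨x, hx⟩ : ∃ x, φ T x ≠ T x := by
    by_contra h
    push_neg at h
    exact hne (ContinuousLinearMap.ext h)
  have hx0 : x ≠ 0 := by rintro rfl; simp at hx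
  set u : H := ‖x‖⁻¹ • x with hu_def
  have hu : ‖u‖ = 1 := norm_smul_inv_norm hx0
  have huu : (inner ℂ u u : ℂ) = 1 := by
    rw [inner_self_eq_norm_sq_to_K, hu]; norm_num
  set a := φ T with ha
  set w : H := (a - T) u with hw_def
  have hw0 : w ≠ 0 := by
    intro h
    have h2 : (a - T) u = ‖x‖⁻¹ • ((a - T) x) := by
      rw [hu_def]; exact (a - T).map_smul_of_tower _ _
    rw [hw_def, h2] at h
    rcases smul_eq_zero.mp h with h1 | h2
    · exact hx0 (by simpa using inv_eq_zero.mp h1)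
    · exact hx (sub_eq_zero.mp (by simpa using h2))
  set δ := ‖w‖ with hδ
  have hδ0 : 0 < δ := norm_pos_iff.mpr hw0
  -- choose n big
  obtain ⟨n, hn⟩ := exists_nat_gt (‖T‖ ^ 2 / δ ^ 2)
  have hnδ : ‖T‖ ^ 2 < n * δ ^ 2 := by
    rw [div_lt_iff₀ (by positivity)] at hn
    linarith
  -- the rank-one compact operator
  set k : H →L[ℂ] H := (innerSL ℂ u).smulRight (T u - (n : ℂ) • w) with hk
  have hkc : φ k = k := hφ.2 k (hK k (rankOne_compact u _))
  have hcontr : ‖a - k‖ ≤ ‖T - k‖ := by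
    have := fullCC_contractive hφ.1 (T - k)
    rwa [map_sub, hkc, ← ha] at this
  -- lower bound
  have hlow : (n + 1) * δ ≤ ‖a - k‖ := by
    have h1 : (a - k) u = ((n : ℂ) + 1) • w := by
      simp only [hk, ContinuousLinearMap.sub_apply, ContinuousLinearMap.smulRight_apply,
        innerSL_apply_apply, huu, one_smul]
      simp only [hw_def, ContinuousLinearMap.sub_apply]
      module
    have h2 : ‖(a - k) u‖ ≤ ‖a - k‖ * ‖u‖ := (a - k).le_opNorm u
    have h3 : ‖((n : ℂ) + 1) • w‖ = ((n : ℝ) + 1) * δ := by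
      rw [norm_smul, ← hδ]
      congr 1
      rw [show ((n : ℂ) + 1) = ((n + 1 : ℕ) : ℂ) by push_cast; ring,
        Complex.norm_natCast]
      push_cast; ring
    rw [h1, hu, mul_one, h3] at h2
    exact h2
  -- upper bound
  have hupp : ‖T - k‖ ≤ Real.sqrt (‖T‖ ^ 2 + (n * δ) ^ 2) := by
    refine ContinuousLinearMap.opNorm_le_bound _ (Real.sqrt_nonneg _) fun y => ?_
    set α : ℂ := inner ℂ u y with hα
    set y' : H := y - α • u with hy'
    have hperp : (inner ℂ u y' : ℂ) = 0 := by
      simp [hy', inner_sub_right, inner_smul_right, huu, hα, hu]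
    have hsplit : (T - k) y = T y' + ((n : ℂ) * α) • w := by
      simp only [hk, ContinuousLinearMap.sub_apply, ContinuousLinearMap.smulRight_apply,
        innerSL_apply_apply, ← hα, hy', map_sub, map_smul]
      module
    have hbound : ‖(T - k) y‖ ≤ ‖T‖ * ‖y'‖ + (n * δ) * ‖α‖ := by
      rw [hsplit]
      refine (norm_add_le _ _).trans ?_
      gcongr
      · exact T.le_opNorm y'
      · rw [norm_smul, norm_mul]
        simp only [Complex.norm_natCast]
        rw [← hδ]; ring_nf; rfl
    have hpyth : ‖y‖ ^ 2 = ‖y'‖ ^ 2 + ‖α‖ ^ 2 := by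
      have hio : (inner ℂ y' (α • u) : ℂ) = 0 := by
        rw [inner_smul_right]
        have : (inner ℂ y' u : ℂ) = 0 := by
          rw [← inner_conj_symm, hperp, map_zero]
        rw [this, mul_zero]
      have := norm_add_sq_eq_norm_sq_add_norm_sq_of_inner_eq_zero y' (α • u) hio
      have hyy : y' + α • u = y := by rw [hy']; abel
      rw [hyy] at this
      rw [sq, sq, sq, this, norm_smul, hu, mul_one]
    -- Cauchy-Schwarz in ℝ²
    have key : ‖T‖ * ‖y'‖ + (n * δ) * ‖α‖ ≤ Real.sqrt (‖T‖ ^ 2 + (n * δ) ^ 2) * ‖y‖ := by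
      have h1 : 0 ≤ ‖T‖ ^ 2 + (n * δ) ^ 2 := by positivity
      have h2 : Real.sqrt (‖T‖ ^ 2 + (n * δ) ^ 2) ^ 2 = ‖T‖ ^ 2 + (n * δ) ^ 2 :=
        Real.sq_sqrt h1
      have h3 : Real.sqrt (‖y'‖ ^ 2 + ‖α‖ ^ 2) ^ 2 = ‖y'‖ ^ 2 + ‖α‖ ^ 2 :=
        Real.sq_sqrt (by positivity)
      have h4 : ‖y‖ = Real.sqrt (‖y'‖ ^ 2 + ‖α‖ ^ 2) := by
        rw [← hpyth, Real.sqrt_sq (norm_nonneg y)]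
      rw [h4]
      set s := Real.sqrt (‖T‖ ^ 2 + (n * δ) ^ 2)
      set t := Real.sqrt (‖y'‖ ^ 2 + ‖α‖ ^ 2)
      have hs0 : 0 ≤ s := Real.sqrt_nonneg _
      have ht0 : 0 ≤ t := Real.sqrt_nonneg _
      have hL0 : 0 ≤ ‖T‖ * ‖y'‖ + (n * δ) * ‖α‖ := by positivity
      have h5 : (‖T‖ * ‖y'‖ + (n * δ) * ‖α‖) ^ 2 ≤ (s * t) ^ 2 := by
        rw [mul_pow, h2, h3]
        nlinarith [sq_nonneg (‖T‖ * ‖α‖ - (n * δ) * ‖y'‖)]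
      have := Real.sqrt_le_sqrt h5
      rwa [Real.sqrt_sq hL0, Real.sqrt_sq (mul_nonneg hs0 ht0)] at this
    exact hbound.trans key
  -- contradiction
  have hfinal : (n + 1) * δ ≤ Real.sqrt (‖T‖ ^ 2 + (n * δ) ^ 2) :=
    hlow.trans (hcontr.trans hupp)
  have hs : Real.sqrt (‖T‖ ^ 2 + (n * δ) ^ 2) ^ 2 = ‖T‖ ^ 2 + (n * δ) ^ 2 :=
    Real.sq_sqrt (by positivity)
  have hA : (0:ℝ) ≤ ((n : ℝ) + 1) * δ := by positivity
  have hsq : (((n : ℝ) + 1) * δ) ^ 2 ≤ Real.sqrt (‖T‖ ^ 2 + (n * δ) ^ 2) ^ 2 :=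
    pow_le_pow_left₀ hA hfinal 2
  rw [hs] at hsq
  nlinarith [hδ0, hnδ, (Nat.cast_nonneg n : (0:ℝ) ≤ (n:ℝ)), sq_nonneg δ, mul_pos hδ0 hδ0]
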